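/- (Barta's inequality.) Let Γ be a countable group acting on the right on a countable set Y, p : Γ → [0,1] a symmetric finitely supported probability measure, and M the associated Markov operator, which restricts to a self-adjoint bounded operator on ℓ²(Y) of norm at most 1. Let λ ∈ [0,1]. If there exists a strictly positive function φ : Y → (0,∞) such that (Mφ)(y) ≤ λ·φ(y) for every y ∈ Y, then the spectral radius of M as an operator on ℓ²(Y) is at most λ. -/

import Mathlib

open Filter Topology Metric Set MeasureTheory Pointwise
open scoped symmDiff ENNReal NNReal

noncomputable section

namespace SPR

variable {X : Type} [MetricSpace X]

/-- The Gromov product of `x` and `y` seen from `z`. -/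
def gromovProd (x y z : X) : ℝ := (dist x z + dist y z - dist x y) / 2

/-- `X` is `δ`-hyperbolic: the four point inequality holds. -/
def GromovHyperbolicWith (δ : ℝ) (X : Type) [MetricSpace X] : Prop :=
  ∀ x y z t : X, min (gromovProd x y t) (gromovProd y z t) - δ ≤ gromovProd x z t

/-- `c` parametrizes a geodesic (by arc length) on the set `I` of times. -/
def IsGeodesicOn (c : ℝ → X) (I : Set ℝ) : Prop :=
  ∀ s ∈ I, ∀ t ∈ I, dist (c s) (c t) = |s - t|

/-- Every pair of points of `X` is joined by a geodesic. -/
def GeodesicSpace (X : Type) [MetricSpace X] : Prop :=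
  ∀ x y : X, ∃ c : ℝ → X,
    c 0 = x ∧ c (dist x y) = y ∧ IsGeodesicOn c (Set.Icc 0 (dist x y))

/-- A geodesic ray, parametrized by `[0,∞)`. -/
def IsGeodesicRay (c : ℝ → X) : Prop := IsGeodesicOn c (Set.Ici 0)

/-- The action of `Γ` on `X` is (metrically) proper. -/
def ProperAction (Γ : Type) (X : Type) [Group Γ] [MetricSpace X] [MulAction Γ X] : Prop :=
  ∀ L : Set X, IsCompact L → {γ : Γ | ∃ x ∈ L, γ • x ∈ L}.Finite

variable {Γ : Type} [Group Γ] [MulAction Γ X]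

/-- The critical exponent (exponential growth rate) of a subset `S` of `Γ`,
for the action on `X` with base point `o`. -/
def critExp (o : X) (S : Set Γ) : ℝ :=
  Filter.limsup
    (fun r : ℝ => Real.log (Nat.card {γ : Γ // γ ∈ S ∧ dist o (γ • o) ≤ r}) / r)
    Filter.atTop

/-- The critical exponent `h_Γ` of the whole group. -/
def fullCritExp (Γ : Type) [Group Γ] [MulAction Γ X] (o : X) : ℝ :=
  critExp o (Set.univ : Set Γ)

/-- The set `Γ_K` of elements `γ ∈ Γ` for which there are `x, y ∈ K` and a geodesic
from `x` to `γ y` meeting `Γ ⬝ K` only inside `K ∪ γ K`. -/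
def gammaK (Γ : Type) [Group Γ] [MulAction Γ X] (K : Set X) : Set Γ :=
  {γ : Γ | ∃ x ∈ K, ∃ y ∈ K, ∃ c : ℝ → X,
    c 0 = x ∧ c (dist x (γ • y)) = γ • y ∧ IsGeodesicOn c (Set.Icc 0 (dist x (γ • y))) ∧
    (c '' Set.Icc 0 (dist x (γ • y))) ∩ (⋃ g : Γ, g • K) ⊆ K ∪ γ • K}

/-- The entropy at infinity `h_Γ^∞`. -/
def entropyAtInfinity (Γ : Type) [Group Γ] [MulAction Γ X] (o : X) : ℝ :=
  sInf {h : ℝ | ∃ K : Set X, IsCompact K ∧ h = critExp o (gammaK Γ K)}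

/-- The action of `Γ` on `X` is strongly positively recurrent (it has a growth gap
at infinity). -/
def SPRAction (Γ : Type) [Group Γ] [MulAction Γ X] (o : X) : Prop :=
  entropyAtInfinity Γ o < fullCritExp Γ o

/-! ### The Gromov boundary -/

theorem gromovProd_ge (x y z w : X) :
    gromovProd x y z - dist z w ≤ gromovProd x y w := by
  have h1 : dist x z ≤ dist x w + dist w z := dist_triangle x w z
  have h2 : dist y z ≤ dist y w + dist w z := dist_triangle y w z
  have h3 : dist w z = dist z w := dist_comm w z
  simp only [gromovProd]
  linarith

/-- A sequence converging to infinity. -/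
def SeqToInf (o : X) (u : ℕ → X) : Prop :=
  Tendsto (fun p : ℕ × ℕ => gromovProd (u p.1) (u p.2) o) atTop atTop

/-- Two sequences converging to infinity define the same boundary point. -/
def seqRel (o : X) (u v : {u : ℕ → X // SeqToInf o u}) : Prop :=
  Tendsto (fun n => gromovProd (u.1 n) (v.1 n) o) atTop atTop

/-- The Gromov boundary of `X` (described with base point `o`). -/
def GromovBoundary (o : X) : Type := Quot (seqRel o)

def mkBoundary (o : X) (u : {u : ℕ → X // SeqToInf o u}) : GromovBoundary o :=
  Quot.mk (seqRel o) u

instance (o : X) : TopologicalSpace (GromovBoundary o) :=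
  inferInstanceAs (TopologicalSpace (Quot (seqRel o)))

instance (o : X) : MeasurableSpace (GromovBoundary o) := borel (GromovBoundary o)

/-- A ray `c` ends at the boundary point `ξ`. -/
def endsAt (o : X) (c : ℝ → X) (ξ : GromovBoundary o) : Prop :=
  ∃ h : SeqToInf o (fun n : ℕ => c n), mkBoundary o ⟨fun n : ℕ => c n, h⟩ = ξ

/-- The bordification `X ∪ ∂X` of `X`. -/
def Bord (o : X) : Type := X ⊕ GromovBoundary o

def Bord.ofX (o : X) (x : X) : Bord o := Sum.inl x

def Bord.ofB (o : X) (ξ : GromovBoundary o) : Bord o := Sum.inr ξ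

/-- Extension of the Gromov product: a point of `X` and a boundary point,
seen from `base`; infimum over representative sequences of the liminf. -/
def gpPB (o base x : X) (ξ : GromovBoundary o) : ℝ :=
  sInf {t : ℝ | ∃ u : {u : ℕ → X // SeqToInf o u}, mkBoundary o u = ξ ∧
    t = Filter.liminf (fun n => gromovProd x (u.1 n) base) Filter.atTop}

/-- Extension of the Gromov product to two boundary points, seen from `base`. -/
def gpBB (o base : X) (ξ η : GromovBoundary o) : EReal :=
  sInf {t : EReal | ∃ u v : {u : ℕ → X // SeqToInf o u},
    mkBoundary o u = ξ ∧ mkBoundary o v = η ∧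
    t = Filter.liminf (fun n => ((gromovProd (u.1 n) (v.1 n) base : ℝ) : EReal)) Filter.atTop}

/-- The Gromov product of two points of the bordification `X ∪ ∂X`, seen from `base`. -/
def gpE (o base : X) (p q : X ⊕ GromovBoundary o) : EReal :=
  match p, q with
  | Sum.inl x, Sum.inl y => ((gromovProd x y base : ℝ) : EReal)
  | Sum.inl x, Sum.inr ξ => ((gpPB o base x ξ : ℝ) : EReal)
  | Sum.inr ξ, Sum.inl x => ((gpPB o base x ξ : ℝ) : EReal)
  | Sum.inr ξ, Sum.inr η => gpBB o base ξ η

/-- The topology of the bordification: generated by the open subsets of `X`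
together with the sets `{p | ⟨p,ξ⟩_o > T}`. -/
instance (o : X) : TopologicalSpace (Bord o) :=
  TopologicalSpace.generateFrom
    ({V : Set (Bord o) | ∃ U : Set X, IsOpen U ∧ V = Bord.ofX o '' U} ∪
     {V : Set (Bord o) | ∃ (ξ : GromovBoundary o) (T : ℝ),
        V = {p : Bord o | (T : EReal) < gpE o o p (Bord.ofB o ξ)}})

/-- `c` together with its interval of definition `I` is a geodesic joining
the point `x ∈ X` to the point `p` of the bordification. -/
def JoinsBord (o : X) (c : ℝ → X) (I : Set ℝ) (x : X) (p : Bord o) : Prop :=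
  (∃ y : X, p = Bord.ofX o y ∧ I = Set.Icc 0 (dist x y) ∧ c 0 = x ∧
    c (dist x y) = y ∧ IsGeodesicOn c I) ∨
  (∃ ξ : GromovBoundary o, p = Bord.ofB o ξ ∧ I = Set.Ici 0 ∧ c 0 = x ∧
    IsGeodesicRay c ∧ endsAt o c ξ)

/-- The shadow `O_o(x,r)`: points of `X ∪ ∂X` joined to `o` by a geodesic
meeting the closed ball `B(x,r)`. -/
def shadow (o x : X) (r : ℝ) : Set (Bord o) :=
  {p | ∃ (c : ℝ → X) (I : Set ℝ), JoinsBord o c I o p ∧ ∃ t ∈ I, c t ∈ Metric.closedBall x r}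

/-- The `K`-radial limit set. -/
def radialLimitSet (o : X) (Γ : Type) [Group Γ] [MulAction Γ X] (K : Set X) :
    Set (GromovBoundary o) :=
  {ξ | ∃ c : ℝ → X, IsGeodesicRay c ∧ endsAt o c ξ ∧
    {γ : Γ | ∃ t : ℝ, 0 ≤ t ∧ c t ∈ γ • K}.Infinite}

/-- The radial limit set. -/
def radialLimitSetFull (o : X) (Γ : Type) [Group Γ] [MulAction Γ X] :
    Set (GromovBoundary o) :=
  {ξ | ∃ K : Set X, IsCompact K ∧ ξ ∈ radialLimitSet o Γ K}

/-- The set `𝓛_K` of endpoints of geodesic rays starting in `K` and meeting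
`Γ ⬝ K` only inside `K`. -/
def LK (o : X) (Γ : Type) [Group Γ] [MulAction Γ X] (K : Set X) :
    Set (GromovBoundary o) :=
  {ξ | ∃ c : ℝ → X, IsGeodesicRay c ∧ c 0 ∈ K ∧ endsAt o c ξ ∧
    (c '' Set.Ici 0) ∩ (⋃ g : Γ, g • K) ⊆ K}

/-- The neighbourhood `U_K^T` of `𝓛_K` in the bordification. -/
def UKT (o : X) (Γ : Type) [Group Γ] [MulAction Γ X] (K : Set X) (T : ℝ) :
    Set (Bord o) :=
  {p | ∃ ξ ∈ LK o Γ K, (T : EReal) ≤ gpE o o p (Bord.ofB o ξ)}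

/-! ### The boundary action -/

section IsometricAction

variable [IsIsometricSMul Γ X]

theorem gromovProd_smul (γ : Γ) (x y o : X) :
    gromovProd (γ • x) (γ • y) o = gromovProd x y (γ⁻¹ • o) := by
  have h1 : dist (γ • x) o = dist x (γ⁻¹ • o) := by
    conv_lhs => rw [← smul_inv_smul γ o]
    exact dist_smul γ x (γ⁻¹ • o)
  have h2 : dist (γ • y) o = dist y (γ⁻¹ • o) := by
    conv_lhs => rw [← smul_inv_smul γ o]
    exact dist_smul γ y (γ⁻¹ • o)
  have h3 : dist (γ • x) (γ • y) = dist x y := dist_smul γ x y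
  simp only [gromovProd, h1, h2, h3]

theorem tendsto_gp_smul {ι : Type} {l : Filter ι} (o : X) (γ : Γ) {u v : ι → X}
    (h : Tendsto (fun n => gromovProd (u n) (v n) o) l atTop) :
    Tendsto (fun n => gromovProd (γ • u n) (γ • v n) o) l atTop := by
  refine tendsto_atTop_mono (fun n => ?_)
    (tendsto_atTop_add_const_right _ (-(dist o (γ⁻¹ • o))) h)
  have h1 := gromovProd_ge (u n) (v n) o (γ⁻¹ • o)
  rw [gromovProd_smul]
  linarith

/-- The action of `Γ` on the Gromov boundary. -/
def boundarySmul (o : X) (γ : Γ) : GromovBoundary o → GromovBoundary o :=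
  Quot.map
    (fun u => ⟨fun n => γ • u.1 n,
      tendsto_gp_smul o γ (u := fun p : ℕ × ℕ => u.1 p.1) (v := fun p : ℕ × ℕ => u.1 p.2) u.2⟩)
    (fun _ _ huv => tendsto_gp_smul o γ huv)

/-- The diagonal action of `γ` on `∂X × ∂X`. -/
def diagSmul (o : X) (γ : Γ) (p : GromovBoundary o × GromovBoundary o) :
    GromovBoundary o × GromovBoundary o :=
  (boundarySmul o γ p.1, boundarySmul o γ p.2)

end IsometricAction

/-! ### Patterson–Sullivan measures -/

/-- A slowly increasing function, in the sense of Patterson. -/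
def SlowlyIncreasing (θ : ℝ → ℝ) : Prop :=
  ∀ ε : ℝ, 0 < ε → ∃ t₀ : ℝ, ∀ t : ℝ, t₀ ≤ t → ∀ u : ℝ, 0 ≤ u →
    θ (t + u) ≤ Real.exp (ε * u) * θ t

/-- The Patterson weight `θ(d(o,γo)) e^{-s d(o,γo)}`. -/
def psWeight (Γ : Type) [Group Γ] [MulAction Γ X] (o : X) (θ : ℝ → ℝ) (s : ℝ)
    (γ : Γ) : ℝ :=
  θ (dist o (γ • o)) * Real.exp (-s * dist o (γ • o))

/-- `ν` is a Patterson–Sullivan measure of `Γ` on the Gromov boundary: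
a probability measure obtained as a weak-* limit, along some sequence `sₙ ↓ h_Γ`,
of the normalized Patterson-weighted orbital measures. -/
def IsPSMeasure (Γ : Type) [Group Γ] [MulAction Γ X] (o : X)
    (ν : Measure (GromovBoundary o)) : Prop :=
  IsProbabilityMeasure ν ∧
  ∃ θ : ℝ → ℝ, (∀ t, 0 < θ t) ∧ Monotone θ ∧ SlowlyIncreasing θ ∧
    (∀ s : ℝ, Summable (psWeight Γ o θ s) ↔ fullCritExp Γ o < s) ∧
    ∃ sq : ℕ → ℝ, (∀ n, fullCritExp Γ o < sq n) ∧
      Tendsto sq atTop (nhds (fullCritExp Γ o)) ∧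
      ∀ f : Bord o → ℝ, Continuous f → (∃ M : ℝ, ∀ p, |f p| ≤ M) →
        Tendsto (fun n =>
            (∑' γ : Γ, psWeight Γ o θ (sq n) γ * f (Bord.ofX o (γ • o))) /
            (∑' γ : Γ, psWeight Γ o θ (sq n) γ)) atTop
          (nhds (∫ ξ, f (Bord.ofB o ξ) ∂ν))

/-! ### The Bowen–Margulis current and the abstract geodesic flow -/

section BowenMargulis

variable [IsIsometricSMul Γ X]

/-- `μ` is a Bowen–Margulis current associated to the Patterson–Sullivan measure `ν`:
a `Γ`-invariant measure on `∂X × ∂X`, vanishing on the diagonal, absolutely continuous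
with respect to `ν ⊗ ν` with density comparable to `e^{2 h_Γ ⟨η,ξ⟩_o}`. -/
def IsBMCurrent (Γ : Type) [Group Γ] [MulAction Γ X] [IsIsometricSMul Γ X] (o : X)
    (ν : Measure (GromovBoundary o))
    (μ : Measure (GromovBoundary o × GromovBoundary o)) : Prop :=
  μ {p | p.1 = p.2} = 0 ∧
  (∀ γ : Γ, Measure.map (diagSmul o γ) μ = μ) ∧
  μ ≪ ν.prod ν ∧
  ∃ C₀ : ℝ, 0 < C₀ ∧
    ∀ᵐ p ∂(ν.prod ν), p.1 ≠ p.2 →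
      C₀⁻¹ * Real.exp (2 * fullCritExp Γ o * (gpBB o o p.1 p.2).toReal)
          ≤ (μ.rnDeriv (ν.prod ν) p).toReal ∧
      (μ.rnDeriv (ν.prod ν) p).toReal
          ≤ C₀ * Real.exp (2 * fullCritExp Γ o * (gpBB o o p.1 p.2).toReal)

/-- The phase space `SX = ∂X × ∂X × ℝ` of the abstract geodesic flow. -/
def SX (o : X) : Type := (GromovBoundary o × GromovBoundary o) × ℝ

instance (o : X) : MeasurableSpace (SX o) :=
  inferInstanceAs (MeasurableSpace ((GromovBoundary o × GromovBoundary o) × ℝ))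

/-- The geodesic flow on `SX`. -/
def flowSX (o : X) (t : ℝ) (v : SX o) : SX o := (v.1, v.2 + t)

/-- The cocycle `β(γ,ξ) = h_Γ⁻¹ log (d(γ⁻¹)_*ν/dν)(ξ)`. -/
def betaCocycle (Γ : Type) [Group Γ] [MulAction Γ X] [IsIsometricSMul Γ X] (o : X)
    (ν : Measure (GromovBoundary o)) (γ : Γ) (ξ : GromovBoundary o) : ℝ :=
  (fullCritExp Γ o)⁻¹ *
    Real.log ((Measure.map (boundarySmul o γ⁻¹) ν).rnDeriv ν ξ).toReal

/-- The (measurable) action of `Γ` on `SX`: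
`γ ⬝ (η,ξ,t) = (γη, γξ, t + κ_γ(η,ξ))`. -/
def smulSX (Γ : Type) [Group Γ] [MulAction Γ X] [IsIsometricSMul Γ X] (o : X)
    (ν : Measure (GromovBoundary o)) (γ : Γ) (v : SX o) : SX o :=
  ((boundarySmul o γ v.1.1, boundarySmul o γ v.1.2),
    v.2 + (betaCocycle Γ o ν γ v.1.2 - betaCocycle Γ o ν γ v.1.1) / 2)

/-- The Bowen–Margulis measure `m = μ ⊗ dt` on `SX`. -/
def bmMeasure (o : X) (μ : Measure (GromovBoundary o × GromovBoundary o)) :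
    Measure (SX o) :=
  μ.prod (volume : Measure ℝ)

/-- `D` is a Borel fundamental domain for the `Γ`-action on `SX`. -/
def IsFundDom (Γ : Type) [Group Γ] [MulAction Γ X] [IsIsometricSMul Γ X] (o : X)
    (ν : Measure (GromovBoundary o)) (μ : Measure (GromovBoundary o × GromovBoundary o))
    (D : Set (SX o)) : Prop :=
  MeasurableSet D ∧ ∀ᵐ v ∂(bmMeasure o μ), ∃! γ : Γ, smulSX Γ o ν γ v ∈ D

/-- A subset of `SX` is `Γ`-invariant up to measure zero. -/
def GammaInvariant (Γ : Type) [Group Γ] [MulAction Γ X] [IsIsometricSMul Γ X] (o : X)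
    (ν : Measure (GromovBoundary o)) (μ : Measure (GromovBoundary o × GromovBoundary o))
    (B : Set (SX o)) : Prop :=
  ∀ γ : Γ, bmMeasure o μ (B ∆ (smulSX Γ o ν γ ⁻¹' B)) = 0

/-- The measure `m̄` of a subset of `SX`, computed via the fundamental domain `D`. -/
def mbar (o : X) (μ : Measure (GromovBoundary o × GromovBoundary o))
    (D B : Set (SX o)) : ℝ≥0∞ :=
  bmMeasure o μ (B ∩ D)

/-- Conservativity of the geodesic flow on `(SX, 𝓑_Γ, m̄)`: almost every point of
a `Γ`-invariant set of positive finite measure returns at unboundedly large times. -/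
def ConservativeFlow (Γ : Type) [Group Γ] [MulAction Γ X] [IsIsometricSMul Γ X] (o : X)
    (ν : Measure (GromovBoundary o)) (μ : Measure (GromovBoundary o × GromovBoundary o))
    (D : Set (SX o)) : Prop :=
  ∀ B : Set (SX o), MeasurableSet B → GammaInvariant Γ o ν μ B →
    0 < mbar o μ D B → mbar o μ D B < ⊤ →
    bmMeasure o μ ((B \ {v | ∀ T : ℝ, ∃ t : ℝ, T ≤ t ∧ flowSX o t v ∈ B}) ∩ D) = 0

/-- Ergodicity of the geodesic flow on `(SX, 𝓑_Γ, m̄)`. -/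
def ErgodicFlow (Γ : Type) [Group Γ] [MulAction Γ X] [IsIsometricSMul Γ X] (o : X)
    (ν : Measure (GromovBoundary o)) (μ : Measure (GromovBoundary o × GromovBoundary o))
    (D : Set (SX o)) : Prop :=
  ∀ B : Set (SX o), MeasurableSet B → GammaInvariant Γ o ν μ B →
    (∀ t : ℝ, bmMeasure o μ (B ∆ (flowSX o t ⁻¹' B)) = 0) →
    mbar o μ D B = 0 ∨ mbar o μ D Bᶜ = 0

/-- Ergodicity of the diagonal `Γ`-action on `(∂²X, μ)`. -/
def ErgodicBoundaryAction (Γ : Type) [Group Γ] [MulAction Γ X] [IsIsometricSMul Γ X] (o : X)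
    (μ : Measure (GromovBoundary o × GromovBoundary o)) : Prop :=
  ∀ A : Set (GromovBoundary o × GromovBoundary o), MeasurableSet A →
    (∀ γ : Γ, μ (A ∆ (diagSmul o γ ⁻¹' A)) = 0) →
    μ A = 0 ∨ μ Aᶜ = 0

/-- The Poincaré series of `Γ` diverges at `s = h_Γ`. -/
def Divergent (Γ : Type) [Group Γ] [MulAction Γ X] (o : X) : Prop :=
  ¬ Summable (fun γ : Γ => Real.exp (-(fullCritExp Γ o) * dist (γ • o) o))

end BowenMargulis

/-! ### Almost invariant vectors, co-amenability, properties (T) and (FM) -/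

/-- The Koopman representation of the `Γ`-action on the countable set `Y`
almost has invariant vectors: for every finite `S ⊆ Γ` and `ε > 0` there is a
nonzero `φ ∈ ℓ²(Y)` with `‖ρ(γ)φ - φ‖ < ε ‖φ‖` for all `γ ∈ S`
(stated with squared `ℓ²` norms). -/
def KoopmanAlmostInvariant (Γ Y : Type) [Group Γ] [MulAction Γ Y] : Prop :=
  ∀ S : Finset Γ, ∀ ε : ℝ, 0 < ε → ∃ φ : Y → ℝ, Memℓp φ 2 ∧ φ ≠ 0 ∧
    ∀ γ ∈ S, ∑' y : Y, (φ (γ⁻¹ • y) - φ y) ^ 2 < ε ^ 2 * ∑' y : Y, (φ y) ^ 2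

/-- `Γ'` is co-amenable in `Γ`: the Koopman representation of `Γ` on `ℓ²` of the
coset space almost has invariant vectors. -/
def CoAmenable (Γ : Type) [Group Γ] (Γ' : Subgroup Γ) : Prop :=
  KoopmanAlmostInvariant Γ (Γ ⧸ Γ')

/-- A unitary representation almost has invariant vectors. -/
def AlmostInvariantVectors {Γ : Type} [Group Γ] {H : Type} [NormedAddCommGroup H]
    [InnerProductSpace ℝ H] (ρ : Γ →* (H ≃ₗᵢ[ℝ] H)) : Prop :=
  ∀ S : Finset Γ, ∀ ε : ℝ, 0 < ε → ∃ φ : H, φ ≠ 0 ∧ ∀ γ ∈ S, ‖ρ γ φ - φ‖ < ε * ‖φ‖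

/-- Kazhdan's property (T): every unitary representation which almost has
invariant vectors has a nonzero invariant vector. -/
def HasPropertyT (Γ : Type) [Group Γ] : Prop :=
  ∀ (H : Type) [NormedAddCommGroup H] [InnerProductSpace ℝ H] [CompleteSpace H],
    ∀ ρ : Γ →* (H ≃ₗᵢ[ℝ] H), AlmostInvariantVectors ρ →
      ∃ φ : H, φ ≠ 0 ∧ ∀ γ : Γ, ρ γ φ = φ

/-- Property (FM): every action of `Γ` on a countable set whose Koopman
representation almost has invariant vectors has a finite orbit. -/
def HasPropertyFM (Γ : Type) [Group Γ] : Prop :=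
  ∀ (Y : Type) [Countable Y], ∀ (_ : MulAction Γ Y),
    KoopmanAlmostInvariant Γ Y → ∃ y : Y, (MulAction.orbit Γ y).Finite

/-! ### Twisted Poincaré series -/

/-- The twisted Poincaré series `A(s) = Σ e^{-s d(γ o, o)} ρ(γ)` is bounded. -/
def TwistedBounded {Γ : Type} [Group Γ] [MulAction Γ X] {H : Type}
    [NormedAddCommGroup H] [InnerProductSpace ℝ H]
    (ρ : Γ →* (H ≃ₗᵢ[ℝ] H)) (o : X) (s : ℝ) : Prop :=
  ∃ M : ℝ, ∀ S : Finset Γ,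
    ‖∑ γ ∈ S, Real.exp (-s * dist (γ • o) o) •
        ((ρ γ).toLinearIsometry.toContinuousLinearMap : H →L[ℝ] H)‖ ≤ M

/-- The critical exponent `h_ρ` of the representation `ρ`. -/
def twistedCritExp {Γ : Type} [Group Γ] [MulAction Γ X] {H : Type}
    [NormedAddCommGroup H] [InnerProductSpace ℝ H]
    (ρ : Γ →* (H ≃ₗᵢ[ℝ] H)) (o : X) : ℝ :=
  sInf {s : ℝ | 0 ≤ s ∧ TwistedBounded ρ o s}

/-! ### Word length and the horocone over a Cayley graph -/

/-- The word length of `γ` with respect to the generating set `S`. -/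
def wordLength {P : Type} [Group P] (S : Set P) (γ : P) : ℕ :=
  sInf {n : ℕ | ∃ l : List P, l.length = n ∧ (∀ x ∈ l, x ∈ S) ∧ l.prod = γ}

/-- `horoBase S γ = (√(|γ|² + 4) - |γ|)/2`, so that the orbital distance on the
horocone over the Cayley graph satisfies `e^{-d(γ o, o)} = (horoBase S γ)²`. -/
def horoBase {P : Type} [Group P] (S : Set P) (γ : P) : ℝ :=
  (Real.sqrt ((wordLength S γ : ℝ) ^ 2 + 4) - (wordLength S γ : ℝ)) / 2

/-! ### The twisted Poincaré series of a Koopman representation -/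

/-- Boundedness of the twisted Poincaré series
`A(s) = Σ_γ e^{-s d(γ o, o)} ρ(γ)` for the Koopman representation of `Γ`
on `ℓ²` of the coset space of `Γ'` (stated with squared `ℓ²` norms). -/
def KoopmanTwistedBounded {X : Type} [MetricSpace X] {Γ : Type} [Group Γ]
    [MulAction Γ X] (o : X) (Γ' : Subgroup Γ) (s : ℝ) : Prop :=
  ∃ M : ℝ, ∀ F : Finset Γ, ∀ φ : Γ ⧸ Γ' → ℝ, Memℓp φ 2 →
    ∑' y : Γ ⧸ Γ', (∑ γ ∈ F, Real.exp (-s * dist (γ • o) o) * φ (γ⁻¹ • y)) ^ 2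
      ≤ M ^ 2 * ∑' y : Γ ⧸ Γ', (φ y) ^ 2

/-- The critical exponent `h_ρ` of the Koopman representation on `ℓ²(Γ'\Γ)`. -/
def koopmanCritExp {X : Type} [MetricSpace X] {Γ : Type} [Group Γ]
    [MulAction Γ X] (o : X) (Γ' : Subgroup Γ) : ℝ :=
  sInf {s : ℝ | 0 ≤ s ∧ KoopmanTwistedBounded o Γ' s}

section BartaAux

variable {Γ Y : Type} [Group Γ]

/-- Auxiliary term for Barta's inequality. -/
private def bartaB (act : Y → Γ → Y) (p : Γ → ℝ) (φ ψ : Y → ℝ) (γ : Γ) (y : Y) : ℝ :=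
  p γ * ψ y ^ 2 * φ (act y γ⁻¹) / (2 * φ y)

/-- Auxiliary term for Barta's inequality. -/
private def bartaA (act : Y → Γ → Y) (p : Γ → ℝ) (φ ψ : Y → ℝ) (γ : Γ) (y : Y) : ℝ :=
  p γ * ψ (act y γ⁻¹) ^ 2 * φ y / (2 * φ (act y γ⁻¹))

end BartaAux

/-- Barta's inequality. Let `Γ` act on the right on a countable
set `Y`, `p` a symmetric finitely supported probability measure on `Γ`, `M` the
associated Markov operator, and `λ ∈ [0,1]`. If there is a strictly positive
`φ : Y → (0,∞)` with `Mφ ≤ λ·φ` pointwise, then the spectral radius of `M` on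
`ℓ²(Y)` is at most `λ` (equivalently, `⟨Mψ,ψ⟩ ≤ λ‖ψ‖²` for every nonnegative
`ψ ∈ ℓ²(Y)`). -/
theorem barta_inequality
    {Γ Y : Type} [Group Γ] [Countable Γ] [Countable Y]
    (act : Y → Γ → Y)
    (hact_one : ∀ y : Y, act y 1 = y)
    (hact_mul : ∀ (y : Y) (γ₁ γ₂ : Γ), act y (γ₁ * γ₂) = act (act y γ₁) γ₂)
    (p : Γ → ℝ) (hp0 : ∀ γ : Γ, 0 ≤ p γ) (hp1 : ∀ γ : Γ, p γ ≤ 1)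
    (hpsymm : ∀ γ : Γ, p γ⁻¹ = p γ)
    (hpfin : {γ : Γ | p γ ≠ 0}.Finite) (hpsum : HasSum p 1)
    (lam : ℝ) (hlam0 : 0 ≤ lam) (hlam1 : lam ≤ 1)
    (φ : Y → ℝ) (hφpos : ∀ y : Y, 0 < φ y)
    (hsuper : ∀ y : Y, ∑' γ : Γ, p γ * φ (act y γ⁻¹) ≤ lam * φ y) :
    ∀ ψ : Y → ℝ, Memℓp ψ 2 → (∀ y : Y, 0 ≤ ψ y) →
      ∑' y : Y, (∑' γ : Γ, p γ * ψ (act y γ⁻¹)) * ψ y ≤ lam * ∑' y : Y, (ψ y) ^ 2 := by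
  intro ψ hψ hψ0
  classical
  set F : Finset Γ := hpfin.toFinset with hF
  have hFmem : ∀ γ : Γ, γ ∈ F ↔ p γ ≠ 0 := fun γ => hpfin.mem_toFinset
  have hcan : ∀ (z : Y) (γ : Γ), act (act z γ) γ⁻¹ = z := fun z γ => by
    rw [← hact_mul, mul_inv_cancel, hact_one]
  have hcan' : ∀ (z : Y) (γ : Γ), act (act z γ⁻¹) γ = z := fun z γ => by
    rw [← hact_mul, inv_mul_cancel, hact_one]
  -- `ψ²` is summable
  have hψ2 : Summable fun y : Y => ψ y ^ 2 := by
    have h := hψ.summable (by norm_num : 0 < (2 : ℝ≥0∞).toReal)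
    refine (summable_congr fun y => ?_).mp h
    rw [show ((2 : ℝ≥0∞).toReal) = ((2 : ℕ) : ℝ) by norm_num, Real.rpow_natCast]
    simp [sq_abs]
  -- the equivalence `y ↦ act y γ`
  let e : Γ → Y ≃ Y := fun γ =>
    ⟨fun y => act y γ, fun y => act y γ⁻¹, fun y => hcan y γ, fun y => hcan' y γ⟩
  -- tsums over `γ` are finite sums over `F`
  have htsum_eq : ∀ f : Y → ℝ, ∀ z : Y,
      (∑' γ : Γ, p γ * f (act z γ⁻¹)) = ∑ γ ∈ F, p γ * f (act z γ⁻¹) := by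
    intro f z
    refine tsum_eq_sum fun γ hγ => ?_
    have : p γ = 0 := by simpa [hFmem] using hγ
    simp [this]
  -- key single-term estimates from superharmonicity
  have hkey : ∀ (z : Y) (γ : Γ), p γ * φ (act z γ⁻¹) ≤ lam * φ z := by
    intro z γ
    by_cases hγ : γ ∈ F
    · calc p γ * φ (act z γ⁻¹)
          ≤ ∑ g ∈ F, p g * φ (act z g⁻¹) :=
            Finset.single_le_sum (f := fun g => p g * φ (act z g⁻¹))
              (fun g _ => mul_nonneg (hp0 g) (hφpos _).le) hγ
        _ = ∑' g : Γ, p g * φ (act z g⁻¹) := (htsum_eq φ z).symm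
        _ ≤ lam * φ z := hsuper z
    · have h0 : p γ = 0 := by simpa [hFmem] using hγ
      rw [h0, zero_mul]
      exact mul_nonneg hlam0 (hφpos z).le
  have hkey2 : ∀ (y : Y) (γ : Γ), p γ * φ y ≤ lam * φ (act y γ⁻¹) := by
    intro y γ
    have h := hkey (act y γ⁻¹) γ⁻¹
    rwa [hpsymm, inv_inv, hcan'] at h
  -- bounds and summability of the auxiliary terms
  have hB_nonneg : ∀ (γ : Γ) (y : Y), 0 ≤ bartaB act p φ ψ γ y := fun γ y =>
    div_nonneg (mul_nonneg (mul_nonneg (hp0 γ) (sq_nonneg _)) (hφpos _).le)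
      (mul_pos two_pos (hφpos y)).le
  have hA_nonneg : ∀ (γ : Γ) (y : Y), 0 ≤ bartaA act p φ ψ γ y := fun γ y =>
    div_nonneg (mul_nonneg (mul_nonneg (hp0 γ) (sq_nonneg _)) (hφpos _).le)
      (mul_pos two_pos (hφpos _)).le
  have hB_le : ∀ (γ : Γ) (y : Y), bartaB act p φ ψ γ y ≤ ψ y ^ 2 / 2 := by
    intro γ y
    have h1 : p γ * φ (act y γ⁻¹) ≤ φ y :=
      (hkey y γ).trans (by nlinarith [hφpos y])
    have h2 := hφpos y
    unfold bartaB
    rw [div_le_div_iff₀ (by positivity) two_pos]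
    nlinarith [mul_le_mul_of_nonneg_left h1 (sq_nonneg (ψ y))]
  have hA_le : ∀ (γ : Γ) (y : Y), bartaA act p φ ψ γ y ≤ ψ (act y γ⁻¹) ^ 2 / 2 := by
    intro γ y
    have h1 : p γ * φ y ≤ φ (act y γ⁻¹) :=
      (hkey2 y γ).trans (by nlinarith [hφpos (act y γ⁻¹)])
    have h2 := hφpos (act y γ⁻¹)
    unfold bartaA
    rw [div_le_div_iff₀ (by positivity) two_pos]
    nlinarith [mul_le_mul_of_nonneg_left h1 (sq_nonneg (ψ (act y γ⁻¹)))]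
  have hψ2γ : ∀ γ : Γ, Summable fun y : Y => ψ (act y γ⁻¹) ^ 2 := by
    intro γ
    have h := (Equiv.summable_iff (e γ⁻¹) (f := fun z : Y => ψ z ^ 2)).mpr hψ2
    simpa [e, Function.comp_def] using h
  have hsumB : ∀ γ : Γ, Summable (bartaB act p φ ψ γ) := fun γ =>
    Summable.of_nonneg_of_le (hB_nonneg γ) (hB_le γ) (hψ2.div_const 2)
  have hsumA : ∀ γ : Γ, Summable (bartaA act p φ ψ γ) := fun γ =>
    Summable.of_nonneg_of_le (hA_nonneg γ) (hA_le γ) ((hψ2γ γ).div_const 2)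
  -- pointwise AM–GM inequality
  have hAM : ∀ (γ : Γ) (y : Y), p γ * ψ (act y γ⁻¹) * ψ y
      ≤ bartaA act p φ ψ γ y + bartaB act p φ ψ γ y := by
    intro γ y
    have hu0 : 0 < φ (act y γ⁻¹) := hφpos _
    have hv0 : 0 < φ y := hφpos _
    have key : ψ (act y γ⁻¹) * ψ y ≤
        ψ (act y γ⁻¹) ^ 2 * φ y / (2 * φ (act y γ⁻¹))
          + ψ y ^ 2 * φ (act y γ⁻¹) / (2 * φ y) := by
      rw [div_add_div _ _ (by positivity) (by positivity), le_div_iff₀ (by positivity)]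
      nlinarith [sq_nonneg (ψ (act y γ⁻¹) * φ y - ψ y * φ (act y γ⁻¹))]
    calc p γ * ψ (act y γ⁻¹) * ψ y = p γ * (ψ (act y γ⁻¹) * ψ y) := by ring
      _ ≤ p γ * (ψ (act y γ⁻¹) ^ 2 * φ y / (2 * φ (act y γ⁻¹))
            + ψ y ^ 2 * φ (act y γ⁻¹) / (2 * φ y)) :=
          mul_le_mul_of_nonneg_left key (hp0 γ)
      _ = bartaA act p φ ψ γ y + bartaB act p φ ψ γ y := by unfold bartaA bartaB; ring
  -- main chain of (in)equalities
  have step1 : ∀ y : Y, (∑' γ : Γ, p γ * ψ (act y γ⁻¹)) * ψ y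
      = ∑ γ ∈ F, p γ * ψ (act y γ⁻¹) * ψ y := by
    intro y
    rw [htsum_eq ψ y, Finset.sum_mul]
  have hsumAB : Summable fun y : Y =>
      ∑ γ ∈ F, (bartaA act p φ ψ γ y + bartaB act p φ ψ γ y) :=
    summable_sum fun γ _ => (hsumA γ).add (hsumB γ)
  have hLHSle : ∑' y : Y, (∑' γ : Γ, p γ * ψ (act y γ⁻¹)) * ψ y
      ≤ ∑' y : Y, ∑ γ ∈ F, (bartaA act p φ ψ γ y + bartaB act p φ ψ γ y) := by
    rw [tsum_congr step1]
    refine Summable.tsum_le_tsum (fun y => Finset.sum_le_sum fun γ _ => hAM γ y) ?_ hsumAB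
    refine Summable.of_nonneg_of_le
      (fun y => Finset.sum_nonneg fun γ _ =>
        mul_nonneg (mul_nonneg (hp0 γ) (hψ0 _)) (hψ0 y))
      (fun y => Finset.sum_le_sum fun γ _ => hAM γ y) hsumAB
  have hswap : (∑' y : Y, ∑ γ ∈ F, (bartaA act p φ ψ γ y + bartaB act p φ ψ γ y))
      = ∑ γ ∈ F, ((∑' y : Y, bartaA act p φ ψ γ y) + ∑' y : Y, bartaB act p φ ψ γ y) := by
    rw [Summable.tsum_finsetSum fun γ _ => (hsumA γ).add (hsumB γ)]
    exact Finset.sum_congr rfl fun γ _ => Summable.tsum_add (hsumA γ) (hsumB γ)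
  have hAtoB : ∀ γ : Γ, (∑' y : Y, bartaA act p φ ψ γ y)
      = ∑' y : Y, bartaB act p φ ψ γ⁻¹ y := by
    intro γ
    rw [← Equiv.tsum_eq (e γ) (bartaA act p φ ψ γ)]
    refine tsum_congr fun z => ?_
    show bartaA act p φ ψ γ (act z γ) = bartaB act p φ ψ γ⁻¹ z
    unfold bartaA bartaB
    rw [hcan, hpsymm, inv_inv]
  have hinvsum : (∑ γ ∈ F, ∑' y : Y, bartaB act p φ ψ γ⁻¹ y)
      = ∑ γ ∈ F, ∑' y : Y, bartaB act p φ ψ γ y := by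
    refine Finset.sum_equiv (Equiv.inv Γ) (fun γ => ?_) (fun γ _ => rfl)
    simp [hFmem, hpsymm]
  have hsum2 : (∑ γ ∈ F, ((∑' y : Y, bartaA act p φ ψ γ y) + ∑' y : Y, bartaB act p φ ψ γ y))
      = ∑' y : Y, ∑ γ ∈ F, 2 * bartaB act p φ ψ γ y := by
    rw [Finset.sum_add_distrib, Finset.sum_congr rfl fun γ _ => hAtoB γ, hinvsum,
      Summable.tsum_finsetSum fun γ _ => (hsumB γ).mul_left 2,
      Finset.sum_congr rfl fun γ _ => (tsum_mul_left :
        (∑' y : Y, 2 * bartaB act p φ ψ γ y) = 2 * ∑' y : Y, bartaB act p φ ψ γ y),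
      ← Finset.mul_sum, two_mul]
  have hthird : (∑' y : Y, ∑ γ ∈ F, 2 * bartaB act p φ ψ γ y)
      ≤ ∑' y : Y, lam * ψ y ^ 2 := by
    refine Summable.tsum_le_tsum (fun y => ?_)
      (summable_sum fun γ _ => (hsumB γ).mul_left 2) (hψ2.mul_left lam)
    have hφy := (hφpos y).ne'
    have h2 : (∑ γ ∈ F, 2 * bartaB act p φ ψ γ y)
        = (ψ y ^ 2 / φ y) * ∑ γ ∈ F, p γ * φ (act y γ⁻¹) := by
      rw [Finset.mul_sum]
      refine Finset.sum_congr rfl fun γ _ => ?_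
      unfold bartaB
      field_simp
    rw [h2]
    have h3 : (∑ γ ∈ F, p γ * φ (act y γ⁻¹)) ≤ lam * φ y := by
      rw [← htsum_eq φ y]; exact hsuper y
    have h4 : 0 ≤ ψ y ^ 2 / φ y := div_nonneg (sq_nonneg _) (hφpos y).le
    calc (ψ y ^ 2 / φ y) * ∑ γ ∈ F, p γ * φ (act y γ⁻¹)
        ≤ (ψ y ^ 2 / φ y) * (lam * φ y) := mul_le_mul_of_nonneg_left h3 h4
      _ = lam * ψ y ^ 2 := by field_simp
  calc ∑' y : Y, (∑' γ : Γ, p γ * ψ (act y γ⁻¹)) * ψ y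
      ≤ ∑' y : Y, ∑ γ ∈ F, (bartaA act p φ ψ γ y + bartaB act p φ ψ γ y) := hLHSle
    _ = ∑ γ ∈ F, ((∑' y : Y, bartaA act p φ ψ γ y) + ∑' y : Y, bartaB act p φ ψ γ y) := hswap
    _ = ∑' y : Y, ∑ γ ∈ F, 2 * bartaB act p φ ψ γ y := hsum2
    _ ≤ ∑' y : Y, lam * ψ y ^ 2 := hthird
    _ = lam * ∑' y : Y, ψ y ^ 2 := tsum_mul_left

end SPR
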